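/- Let $\mathcal{P}$ be an orthogonal projection on a Hilbert space $\mathcal{H}$, $\mathcal{Q} = 1 - \mathcal{P}$, and let $v \geq 0$ be a bounded non-negative self-adjoint operator on $\mathcal{H} \otimes \mathcal{H}$. Then for every $\epsilon > 0$, $$v \geq \mathcal{P}^{\otimes 2} v \mathcal{P}^{\otimes 2} + \mathcal{P}^{\otimes 2} v \mathcal{Q}^{\otimes 2} + \mathcal{Q}^{\otimes 2} v \mathcal{P}^{\otimes 2} + (1-\epsilon)(\mathcal{P}\otimes\mathcal{Q} + \mathcal{Q}\otimes\mathcal{P}) v (\mathcal{P}\otimes\mathcal{Q} + \mathcal{Q}\otimes\mathcal{P}) - \epsilon^{-1} \|v\| \, \mathcal{Q}^{\otimes 2},$$ provided the cross terms $(\mathcal{P}\otimes\mathcal{Q}+\mathcal{Q}\otimes\mathcal{P}) v \mathcal{P}^{\otimes 2}$ and its adjoint vanish. -/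

import Mathlib

/-- Splitting of a non-negative two-body interaction `v` on `ℋ ⊗ ℋ` along the sectors of
`1 = (𝒫+𝒬)⊗(𝒫+𝒬)`. The four sector projections `𝒫⊗𝒫, 𝒫⊗𝒬, 𝒬⊗𝒫, 𝒬⊗𝒬` are mutually
orthogonal projections summing to one. Provided the cross terms coupling `𝒫⊗𝒫` to the
one-`𝒬` sector vanish, for every `ε > 0`:
`v ≥ 𝒫⊗²v𝒫⊗² + 𝒫⊗²v𝒬⊗² + 𝒬⊗²v𝒫⊗² + (1-ε)(𝒫⊗𝒬+𝒬⊗𝒫)v(𝒫⊗𝒬+𝒬⊗𝒫) - ε⁻¹‖v‖𝒬⊗²`. -/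
theorem two_body_sector_decomposition_bound
    {K : Type*} [NormedAddCommGroup K] [InnerProductSpace ℂ K] [CompleteSpace K]
    (v : K →L[ℂ] K) (hv_sa : IsSelfAdjoint v)
    (hv_nn : ∀ ψ : K, 0 ≤ (inner ℂ ψ (v ψ) : ℂ).re)
    (PP PQ QP QQ : K →L[ℂ] K)
    (hsa : IsSelfAdjoint PP ∧ IsSelfAdjoint PQ ∧ IsSelfAdjoint QP ∧ IsSelfAdjoint QQ)
    (hidem : PP ∘L PP = PP ∧ PQ ∘L PQ = PQ ∧ QP ∘L QP = QP ∧ QQ ∘L QQ = QQ)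
    (horth : PP ∘L PQ = 0 ∧ PP ∘L QP = 0 ∧ PP ∘L QQ = 0 ∧
             PQ ∘L QP = 0 ∧ PQ ∘L QQ = 0 ∧ QP ∘L QQ = 0)
    (hsum : PP + PQ + QP + QQ = 1)
    (hcross : (PQ + QP) ∘L v ∘L PP = 0 ∧ PP ∘L v ∘L (PQ + QP) = 0)
    (ε : ℝ) (hε : 0 < ε) (ψ : K) :
    (inner ℂ (PP ψ) (v (PP ψ)) : ℂ).re
      + (inner ℂ (PP ψ) (v (QQ ψ)) : ℂ).re + (inner ℂ (QQ ψ) (v (PP ψ)) : ℂ).re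
      + (1 - ε) * (inner ℂ ((PQ + QP) ψ) (v ((PQ + QP) ψ)) : ℂ).re
      - ε⁻¹ * ‖v‖ * ‖QQ ψ‖ ^ 2 ≤
    (inner ℂ ψ (v ψ) : ℂ).re := by
  have hψ : ψ = PP ψ + (PQ + QP) ψ + QQ ψ := by
    have h := congrArg (fun T : K →L[ℂ] K => T ψ) hsum
    simp only [ContinuousLinearMap.add_apply, ContinuousLinearMap.one_apply] at h
    conv_lhs => rw [← h]
    simp only [ContinuousLinearMap.add_apply]
    abel
  set a := PP ψ with ha
  set b := (PQ + QP) ψ with hb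
  set c := QQ ψ with hc
  have hsym := hv_sa.isSymmetric
  have hconj : ∀ x y : K, (inner ℂ y (v x) : ℂ) = starRingEnd ℂ (inner ℂ x (v y) : ℂ) := by
    intro x y
    rw [← inner_conj_symm]
    exact congrArg _ (hsym x y)
  have hre : ∀ x y : K, (inner ℂ y (v x) : ℂ).re = (inner ℂ x (v y) : ℂ).re := by
    intro x y; rw [hconj x y, Complex.conj_re]
  -- vanishing cross terms
  have hba : (inner ℂ b (v a) : ℂ) = 0 := by
    have h0 : (PQ + QP) (v a) = 0 :=
      congrArg (fun T : K →L[ℂ] K => T ψ) hcross.1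
    have hsa' : IsSelfAdjoint (PQ + QP) := hsa.2.1.add hsa.2.2.1
    calc (inner ℂ b (v a) : ℂ) = inner ℂ (ContinuousLinearMap.adjoint (PQ + QP) ψ) (v a) := by
          rw [hsa'.adjoint_eq]
      _ = inner ℂ ψ ((PQ + QP) (v a)) := ContinuousLinearMap.adjoint_inner_left _ _ _
      _ = 0 := by rw [h0, inner_zero_right]
  have hab : (inner ℂ a (v b) : ℂ) = 0 := by
    have h0 : PP (v b) = 0 :=
      congrArg (fun T : K →L[ℂ] K => T ψ) hcross.2
    calc (inner ℂ a (v b) : ℂ) = inner ℂ (ContinuousLinearMap.adjoint PP ψ) (v b) := by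
          rw [hsa.1.adjoint_eq]
      _ = inner ℂ ψ (PP (v b)) := ContinuousLinearMap.adjoint_inner_left _ _ _
      _ = 0 := by rw [h0, inner_zero_right]
  -- expansion
  have expand : (inner ℂ ψ (v ψ) : ℂ).re =
      (inner ℂ a (v a) : ℂ).re + (inner ℂ a (v c) : ℂ).re + (inner ℂ c (v a) : ℂ).re
        + (inner ℂ b (v b) : ℂ).re + 2 * (inner ℂ b (v c) : ℂ).re + (inner ℂ c (v c) : ℂ).re := by
    nth_rewrite 1 [hψ]; nth_rewrite 1 [hψ]
    simp only [map_add, inner_add_left, inner_add_right, Complex.add_re, hab, hba,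
      Complex.zero_re, hre c b]
    ring
  -- positivity pieces
  have hC : 0 ≤ (inner ℂ c (v c) : ℂ).re := hv_nn c
  have hCle : (inner ℂ c (v c) : ℂ).re ≤ ‖v‖ * ‖c‖ ^ 2 := by
    calc (inner ℂ c (v c) : ℂ).re ≤ ‖(inner ℂ c (v c) : ℂ)‖ := Complex.re_le_norm _
      _ ≤ ‖c‖ * ‖v c‖ := norm_inner_le_norm _ _
      _ ≤ ‖c‖ * (‖v‖ * ‖c‖) := by
          exact mul_le_mul_of_nonneg_left (v.le_opNorm c) (norm_nonneg c)
      _ = ‖v‖ * ‖c‖ ^ 2 := by ring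
  have hkey : 0 ≤ ε * (inner ℂ b (v b) : ℂ).re + 2 * (inner ℂ b (v c) : ℂ).re
      + ε⁻¹ * (inner ℂ c (v c) : ℂ).re := by
    set s : ℝ := Real.sqrt ε with hs
    have hs0 : s ≠ 0 := ne_of_gt (Real.sqrt_pos.mpr hε)
    have hσ2 : ((s : ℂ)) * ((s : ℂ)) = (ε : ℂ) := by
      rw [← Complex.ofReal_mul, Real.mul_self_sqrt hε.le]
    have hστ : ((s : ℂ)) * ((s⁻¹ : ℝ) : ℂ) = 1 := by
      rw [← Complex.ofReal_mul, mul_inv_cancel₀ hs0, Complex.ofReal_one]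
    have hτ2 : ((s⁻¹ : ℝ) : ℂ) * ((s⁻¹ : ℝ) : ℂ) = ((ε⁻¹ : ℝ) : ℂ) := by
      rw [← Complex.ofReal_mul, ← mul_inv, Real.mul_self_sqrt hε.le]
    have hpos := hv_nn (((s : ℂ)) • b + (((s⁻¹ : ℝ) : ℂ)) • c)
    have hexp : (inner ℂ (((s : ℂ)) • b + (((s⁻¹ : ℝ) : ℂ)) • c)
          (v (((s : ℂ)) • b + (((s⁻¹ : ℝ) : ℂ)) • c)) : ℂ)
        = (ε : ℂ) * inner ℂ b (v b) + (inner ℂ b (v c) + inner ℂ c (v b))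
          + ((ε⁻¹ : ℝ) : ℂ) * inner ℂ c (v c) := by
      simp only [map_add, map_smul, inner_add_left, inner_add_right, inner_smul_left,
        inner_smul_right, Complex.conj_ofReal]
      linear_combination (inner ℂ b (v b) : ℂ) * hσ2 + (inner ℂ b (v c) : ℂ) * hστ
        + (inner ℂ c (v b) : ℂ) * hστ + (inner ℂ c (v c) : ℂ) * hτ2
    rw [hexp] at hpos
    simp only [Complex.add_re, Complex.re_ofReal_mul] at hpos
    rw [hre b c] at hpos
    linarith
  have hεinv : (0:ℝ) ≤ ε⁻¹ := (inv_pos.mpr hε).le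
  have hprod : 0 ≤ ε⁻¹ * (‖v‖ * ‖c‖ ^ 2 - (inner ℂ c (v c) : ℂ).re) :=
    mul_nonneg hεinv (by linarith)
  rw [expand]
  nlinarith [hkey, hC, hprod]
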